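/- For the three-species GLV system with γ = (c+e)/2, the sum S(t) = s₁(t) + s₂(t) + s₃(t) satisfies the logistic equation dS/dt = ρS − γS². In particular, the plane {s ∈ ℝ³ : s₁ + s₂ + s₃ = ρ/γ} is invariant under the flow. -/

import Mathlib

/-- The three-species generalized Lotka-Volterra vector field. -/
noncomputable def glv3 (ρ γ c e : ℝ) (s : Fin 3 → ℝ) (i : Fin 3) : ℝ :=
  ρ * s i - γ * (s i) ^ 2 - s i * (c * s (i + 1) + e * s (i + 2))

theorem sum_satisfies_logistic_and_plane_invariant (ρ c e : ℝ)
    (hρ : 0 < ρ) (hc : 0 < c) (he : 0 < e)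
    (γ : ℝ) (hγ : γ = (c + e) / 2)
    (s : ℝ → Fin 3 → ℝ)
    (hsol : ∀ t : ℝ, ∀ i : Fin 3,
      HasDerivAt (fun τ => s τ i) (glv3 ρ γ c e (s t) i) t) :
    (∀ t : ℝ, HasDerivAt (fun τ => ∑ i, s τ i)
        (ρ * (∑ i, s t i) - γ * (∑ i, s t i) ^ 2) t) ∧
    ((∑ i, s 0 i) = ρ / γ → ∀ t : ℝ, (∑ i, s t i) = ρ / γ) := by
  have hγpos : 0 < γ := by rw [hγ]; linarith
  have hS : ∀ t : ℝ, HasDerivAt (fun τ => ∑ i, s τ i)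
      (ρ * (∑ i, s t i) - γ * (∑ i, s t i) ^ 2) t := by
    intro t
    have h : HasDerivAt (fun τ => ∑ i, s τ i)
        (∑ i, glv3 ρ γ c e (s t) i) t := HasDerivAt.fun_sum (fun i _ => hsol t i)
    have key : (∑ i, glv3 ρ γ c e (s t) i)
        = ρ * (∑ i, s t i) - γ * (∑ i, s t i) ^ 2 := by
      simp only [glv3, Fin.sum_univ_three]
      have h01 : ((0 : Fin 3) + 1) = 1 := by decide
      have h02 : ((0 : Fin 3) + 2) = 2 := by decide
      have h11 : ((1 : Fin 3) + 1) = 2 := by decide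
      have h12 : ((1 : Fin 3) + 2) = 0 := by decide
      have h21 : ((2 : Fin 3) + 1) = 0 := by decide
      have h22 : ((2 : Fin 3) + 2) = 1 := by decide
      rw [h01, h02, h11, h12, h21, h22, hγ]
      ring
    rwa [key] at h
  refine ⟨hS, ?_⟩
  intro h0
  set S : ℝ → ℝ := fun t => ∑ i, s t i with hSdef
  have hS' : ∀ t : ℝ, HasDerivAt S (ρ * S t - γ * S t ^ 2) t := hS
  have hScont : Continuous S :=
    continuous_iff_continuousAt.mpr fun t => (hS' t).continuousAt
  -- g = -γ S, its antiderivative G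
  have hg : Continuous fun τ : ℝ => -γ * S τ := by continuity
  set G : ℝ → ℝ := fun t => ∫ τ in (0:ℝ)..t, -γ * S τ with hGdef
  have hG : ∀ t : ℝ, HasDerivAt G (-γ * S t) t := by
    intro t
    exact intervalIntegral.integral_hasDerivAt_right
      (hg.intervalIntegrable 0 t)
      (hg.stronglyMeasurableAtFilter _ _) hg.continuousAt
  -- h = (S - ρ/γ) * exp(-G) has zero derivative
  set h : ℝ → ℝ := fun t => (S t - ρ / γ) * Real.exp (-G t) with hhdef
  have hh : ∀ t : ℝ, HasDerivAt h 0 t := by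
    intro t
    have h1 : HasDerivAt (fun τ => S τ - ρ / γ) (ρ * S t - γ * S t ^ 2) t :=
      (hS' t).sub_const _
    have h2 : HasDerivAt (fun τ => Real.exp (-G τ))
        (Real.exp (-G t) * (γ * S t)) t := by
      have := ((hG t).neg).exp
      simp only [Pi.neg_apply] at this
      convert this using 1
      ring
    have := h1.fun_mul h2
    refine this.congr_deriv ?_
    have hSne : γ ≠ 0 := ne_of_gt hγpos
    have hk : ρ / γ * γ = ρ := div_mul_cancel₀ ρ hSne
    linear_combination (-(Real.exp (-G t) * S t)) * hk
  have hconst : ∀ t : ℝ, h t = h 0 := by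
    intro t
    have hd : Differentiable ℝ h := fun x => (hh x).differentiableAt
    have hz : ∀ x, deriv h x = 0 := fun x => (hh x).deriv
    exact is_const_of_deriv_eq_zero hd hz t 0
  have h00 : h 0 = 0 := by
    simp only [hhdef]
    rw [show S 0 = ρ / γ from h0]
    ring
  intro t
  have ht : h t = 0 := (hconst t).trans h00
  have := Real.exp_ne_zero (-G t)
  have hfac : S t - ρ / γ = 0 := by
    by_contra hne
    exact (mul_ne_zero hne this) ht
  linarith [hfac]
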